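/- For the polynomials p_k and q_k and the centred mean-difference computed with unit step, (μδ p_k)(ξ) := (p_k(ξ+1) − p_k(ξ−1))/2 = q_{k−1}(ξ) for all k ≥ 1 (q_0 ≡ 1); iterating together with δ²p_k = p_{k−1} gives, for 1 ≤ m ≤ k, μδ^{2m−1} p_k = q_{k−m} pointwise, and μδ^{2m−1} p_k = 0 for m > k. -/

import Mathlib

/-- `p_k(ξ) = (1/(2k−1)!)∏_{m=−(k−1)}^{k−1}(ξ−m)` for `k ≥ 1`, with `p_0 ≡ 0`. -/
noncomputable def pPoly (k : ℕ) (ξ : ℝ) : ℝ :=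
  if k = 0 then 0 else
    (1 / (Nat.factorial (2 * k - 1) : ℝ)) *
      ∏ m ∈ Finset.Icc (-(k : ℤ) + 1) ((k : ℤ) - 1), (ξ - (m : ℝ))

/-- `q_k(ξ) = (ξ/(2k)) p_k(ξ)` for `k ≥ 1`, with `q_0 ≡ 1`. -/
noncomputable def qPoly (k : ℕ) (ξ : ℝ) : ℝ :=
  if k = 0 then 1 else ξ / (2 * k) * pPoly k ξ

/-- Second central difference with unit step: `δ²f(ξ) = f(ξ+1) − 2f(ξ) + f(ξ−1)`. -/
def d2 (f : ℝ → ℝ) : ℝ → ℝ := fun ξ => f (ξ + 1) - 2 * f ξ + f (ξ - 1)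

/-- Centred mean-difference with unit step: `μδ f(ξ) = (f(ξ+1) − f(ξ−1))/2`. -/
noncomputable def md (f : ℝ → ℝ) : ℝ → ℝ := fun ξ => (f (ξ + 1) - f (ξ - 1)) / 2

section Aux

open Finset

/-- The bare product defining `pPoly`. -/
noncomputable def Qprod (k : ℕ) (ξ : ℝ) : ℝ :=
  ∏ m ∈ Finset.Icc (-(k : ℤ) + 1) ((k : ℤ) - 1), (ξ - (m : ℝ))

lemma Icc_succ_left' (a b : ℤ) : Finset.Icc (a + 1) b = Finset.Ioc a b := by
  ext m; simp [Int.add_one_le_iff]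

lemma Ico_pred_right' (a b : ℤ) : Finset.Icc a (b - 1) = Finset.Ico a b := by
  ext m; simp [Int.le_sub_one_iff]

lemma prod_split_lo (a b : ℤ) (h : a ≤ b) (f : ℤ → ℝ) :
    ∏ m ∈ Finset.Icc a b, f m = f a * ∏ m ∈ Finset.Icc (a + 1) b, f m := by
  rw [Icc_succ_left', ← Finset.Ioc_insert_left h, Finset.prod_insert (by simp)]

lemma prod_split_hi (a b : ℤ) (h : a ≤ b) (f : ℤ → ℝ) :
    ∏ m ∈ Finset.Icc a b, f m = f b * ∏ m ∈ Finset.Icc a (b - 1), f m := by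
  rw [Ico_pred_right', ← Finset.Ico_insert_right h, Finset.prod_insert (by simp)]

lemma prod_shift (a b c : ℤ) (f : ℤ → ℝ) :
    ∏ m ∈ Finset.Icc (a + c) (b + c), f m = ∏ m ∈ Finset.Icc a b, f (m + c) := by
  rw [← Finset.map_add_right_Icc, Finset.prod_map]
  rfl

lemma Qprod_mid (k : ℕ) (hk : 1 ≤ k) (ξ : ℝ) :
    Qprod (k + 1) ξ = (ξ + k) * (ξ - k) * Qprod k ξ := by
  have hK : 1 ≤ (k : ℤ) := by exact_mod_cast hk
  unfold Qprod
  have hb1 : (-((k:ℕ)+1 : ℕ) : ℤ) + 1 = -(k : ℤ) := by push_cast; ring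
  have hb2 : (((k:ℕ)+1 : ℕ) : ℤ) - 1 = (k : ℤ) := by push_cast; ring
  rw [hb1, hb2, prod_split_lo (-(k:ℤ)) k (by omega),
    prod_split_hi (-(k:ℤ)+1) k (by omega)]
  push_cast
  ring

lemma Qprod_up (k : ℕ) (hk : 1 ≤ k) (ξ : ℝ) :
    Qprod (k + 1) (ξ + 1) = (ξ + 1 + k) * (ξ + k) * Qprod k ξ := by
  unfold Qprod
  have hb1 : (-((k:ℕ)+1 : ℕ) : ℤ) + 1 = (-(k : ℤ) - 1) + 1 := by push_cast; ring
  have hb2 : (((k:ℕ)+1 : ℕ) : ℤ) - 1 = ((k : ℤ) - 1) + 1 := by push_cast; ring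
  rw [hb1, hb2, prod_shift (-(k:ℤ)-1) ((k:ℤ)-1) 1,
    prod_split_lo (-(k:ℤ)-1) ((k:ℤ)-1) (by omega),
    prod_split_lo (-(k:ℤ)-1+1) ((k:ℤ)-1) (by omega)]
  have : ∀ m ∈ Finset.Icc (-(k:ℤ)-1+1+1) ((k:ℤ)-1), (ξ + 1 - ((m + 1 : ℤ) : ℝ)) = ξ - (m : ℝ) := by
    intro m _; push_cast; ring
  rw [Finset.prod_congr rfl this]
  have hb3 : (-(k:ℤ)-1+1+1) = -(k:ℤ) + 1 := by ring
  rw [hb3]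
  push_cast
  ring

lemma Qprod_down (k : ℕ) (hk : 1 ≤ k) (ξ : ℝ) :
    Qprod (k + 1) (ξ - 1) = (ξ - 1 - k) * (ξ - k) * Qprod k ξ := by
  unfold Qprod
  have hb1 : (-((k:ℕ)+1 : ℕ) : ℤ) + 1 = (-(k : ℤ) + 1) + -1 := by push_cast; ring
  have hb2 : (((k:ℕ)+1 : ℕ) : ℤ) - 1 = ((k : ℤ) + 1) + -1 := by push_cast; ring
  rw [hb1, hb2, prod_shift (-(k:ℤ)+1) ((k:ℤ)+1) (-1),
    prod_split_hi (-(k:ℤ)+1) ((k:ℤ)+1) (by omega),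
    prod_split_hi (-(k:ℤ)+1) ((k:ℤ)+1-1) (by omega)]
  have : ∀ m ∈ Finset.Icc (-(k:ℤ)+1) ((k:ℤ)+1-1-1), (ξ - 1 - ((m + -1 : ℤ) : ℝ)) = ξ - (m : ℝ) := by
    intro m _; push_cast; ring
  rw [Finset.prod_congr rfl this]
  have hb3 : ((k:ℤ)+1-1-1) = (k:ℤ) - 1 := by ring
  rw [hb3]
  push_cast
  ring

lemma fact_rel (k : ℕ) (hk : 1 ≤ k) :
    ((2 * (k + 1) - 1).factorial : ℝ)
      = (2 * k + 1) * (2 * k) * ((2 * k - 1).factorial : ℝ) := by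
  have e1 : 2 * (k + 1) - 1 = (2 * k - 1) + 1 + 1 := by omega
  have e3 : ((2 * k - 1 : ℕ) : ℝ) = 2 * (k : ℝ) - 1 := by
    rw [Nat.cast_sub (by omega)]; push_cast; ring
  rw [e1, Nat.factorial_succ, Nat.factorial_succ]
  push_cast [e3]
  ring

lemma pPoly_eq (k : ℕ) (hk : k ≠ 0) (ξ : ℝ) :
    pPoly k ξ = (1 / (Nat.factorial (2 * k - 1) : ℝ)) * Qprod k ξ := by
  unfold pPoly Qprod
  rw [if_neg hk]

lemma d2_pPoly (n : ℕ) : d2 (pPoly n) = pPoly (n - 1) := by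
  funext ξ
  match n with
  | 0 => simp [d2, pPoly]
  | 1 =>
    simp only [d2, pPoly]
    norm_num
    ring
  | (k + 2) =>
    have hk : 1 ≤ k + 1 := by omega
    simp only [d2]
    rw [pPoly_eq (k+2) (by omega), pPoly_eq (k+2) (by omega), pPoly_eq (k+2) (by omega)]
    show (1 / ((2 * ((k+1) + 1) - 1).factorial : ℝ)) * Qprod ((k+1)+1) (ξ+1)
        - 2 * ((1 / ((2 * ((k+1) + 1) - 1).factorial : ℝ)) * Qprod ((k+1)+1) ξ)
        + (1 / ((2 * ((k+1) + 1) - 1).factorial : ℝ)) * Qprod ((k+1)+1) (ξ-1)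
        = pPoly (k + 2 - 1) ξ
    rw [Qprod_up (k+1) hk, Qprod_mid (k+1) hk, Qprod_down (k+1) hk, fact_rel (k+1) hk]
    have : k + 2 - 1 = k + 1 := by omega
    rw [this, pPoly_eq (k+1) (by omega)]
    have hf : ((2 * (k+1) - 1).factorial : ℝ) ≠ 0 := by
      exact_mod_cast Nat.factorial_ne_zero _
    field_simp
    ring

lemma md_pPoly (k : ℕ) : ∀ ξ : ℝ, md (pPoly (k + 1)) ξ = qPoly k ξ := by
  intro ξ
  match k with
  | 0 =>
    simp only [md, pPoly, qPoly]
    norm_num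
  | (j + 1) =>
    have hk : 1 ≤ j + 1 := by omega
    simp only [md]
    rw [pPoly_eq (j+1+1) (by omega), pPoly_eq (j+1+1) (by omega),
      Qprod_up (j+1) hk, Qprod_down (j+1) hk, fact_rel (j+1) hk]
    have hq : qPoly (j+1) ξ = ξ / (2 * ((j:ℝ)+1)) *
        ((1 / ((2 * (j+1) - 1).factorial : ℝ)) * Qprod (j+1) ξ) := by
      rw [qPoly, if_neg (by omega), pPoly_eq (j+1) (by omega)]
      push_cast
      ring
    rw [hq]
    have hf : ((2 * (j+1) - 1).factorial : ℝ) ≠ 0 := by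
      exact_mod_cast Nat.factorial_ne_zero _
    have h2 : ((j:ℝ) + 1) ≠ 0 := by positivity
    field_simp
    push_cast
    ring

lemma iter_d2 (j k : ℕ) : d2^[j] (pPoly k) = pPoly (k - j) := by
  induction j with
  | zero => simp
  | succ n ih =>
    rw [Function.iterate_succ_apply', ih, d2_pPoly, Nat.sub_sub]

end Aux

/-- `μδ p_k = q_{k−1}`, and iterating with `δ²p_k = p_{k−1}`:
`μδ^{2m−1} p_k = q_{k−m}` pointwise for `1 ≤ m ≤ k`, zero for `m > k`. -/
theorem mean_difference_iterates (k : ℕ) (hk : 1 ≤ k) :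
    (∀ ξ : ℝ, md (pPoly k) ξ = qPoly (k - 1) ξ) ∧
    (∀ m : ℕ, 1 ≤ m → m ≤ k →
      ∀ ξ : ℝ, md (d2^[m - 1] (pPoly k)) ξ = qPoly (k - m) ξ) ∧
    (∀ m : ℕ, k < m → ∀ ξ : ℝ, md (d2^[m - 1] (pPoly k)) ξ = 0) := by
  refine ⟨?_, ?_, ?_⟩
  · intro ξ
    have h := md_pPoly (k - 1) ξ
    rwa [Nat.sub_add_cancel hk] at h
  · intro m hm hmk ξ
    rw [iter_d2]
    have h1 : k - (m - 1) = (k - m) + 1 := by omega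
    rw [h1]
    exact md_pPoly (k - m) ξ
  · intro m hm ξ
    rw [iter_d2]
    have h0 : k - (m - 1) = 0 := by omega
    rw [h0]
    simp [md, pPoly]
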